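/- Let T ⊆ F_2^v be an affine subspace of dimension t+1. Then T can be split into a [t]-trade {T0, T1} with T0 ∪ T1 = T if and only if T is a translation of the linear span of a basis consisting of t+1 vectors with pairwise disjoint supports. -/

import Mathlib

/-- The size (number of ones) of a vector of `F_2^v`. -/
def size {v : ℕ} (x : Fin v → ZMod 2) : ℕ :=
  (Finset.univ.filter (fun j => x j = 1)).card

/-- A `[t]`-trade. -/
def IsTrade (t v : ℕ) (T0 T1 : Finset (Fin v → ZMod 2)) : Prop :=
  Disjoint T0 T1 ∧
  ∀ s : Fin v → ZMod 2, size s ≤ t →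
    (T0.filter (fun x => ∀ j, s j = 1 → x j = 1)).card =
    (T1.filter (fun x => ∀ j, s j = 1 → x j = 1)).card

open Finset

def e2 (b : ZMod 2) : ℤ := (-1) ^ b.val

lemma e2_add (a b : ZMod 2) : e2 (a + b) = e2 a * e2 b := by revert a b; decide

lemma e2_zero : e2 0 = 1 := rfl

lemma e2_one : e2 1 = -1 := by decide

lemma e2_ne_zero (b : ZMod 2) : e2 b ≠ 0 := by revert b; decide

lemma e2_sum {γ : Type*} (F : Finset γ) (f : γ → ZMod 2) :
    e2 (∑ c ∈ F, f c) = ∏ c ∈ F, e2 (f c) := by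
  induction F using Finset.cons_induction with
  | empty => simp [e2_zero]
  | cons a s ha ih => rw [Finset.sum_cons, Finset.prod_cons, e2_add, ih]

def dot {n : ℕ} (η ε : Fin n → ZMod 2) : ZMod 2 := ∑ i, η i * ε i

lemma dot_comm {n : ℕ} (η ε : Fin n → ZMod 2) : dot η ε = dot ε η := by
  simp [dot, mul_comm]

lemma dot_add_right {n : ℕ} (η ε ε' : Fin n → ZMod 2) :
    dot η (ε + ε') = dot η ε + dot η ε' := by
  simp [dot, mul_add, Finset.sum_add_distrib]

lemma dot_update {n : ℕ} (η ε : Fin n → ZMod 2) (i0 : Fin n) :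
    dot η (Function.update ε i0 (ε i0 + 1)) = dot η ε + η i0 := by
  have h : ∀ i, η i * (Function.update ε i0 (ε i0 + 1)) i
      = Function.update (fun i => η i * ε i) i0 (η i0 * (ε i0 + 1)) i := by
    intro i
    by_cases hi : i = i0
    · subst hi; simp
    · simp [Function.update_of_ne hi]
  unfold dot
  rw [Finset.sum_congr rfl (fun i _ => h i),
    Finset.sum_update_of_mem (Finset.mem_univ i0),
    Finset.sum_eq_add_sum_sdiff_singleton_of_mem (Finset.mem_univ i0) (fun i => η i * ε i)]
  ring

lemma orth {n : ℕ} (η : Fin n → ZMod 2) (hη : η ≠ 0) :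
    ∑ ε : Fin n → ZMod 2, e2 (dot η ε) = 0 := by
  obtain ⟨i0, hi0⟩ : ∃ i, η i = 1 := by
    by_contra h
    push_neg at h
    apply hη; funext i
    have h2 : ∀ b : ZMod 2, b ≠ 1 → b = 0 := by decide
    exact h2 (η i) (h i)
  set σ : (Fin n → ZMod 2) → (Fin n → ZMod 2) :=
    fun ε => Function.update ε i0 (ε i0 + 1) with hσ
  have hinv : Function.Involutive σ := by
    intro ε
    funext i
    by_cases hi : i = i0
    · subst hi
      have h11 : (1 : ZMod 2) + 1 = 0 := rfl
      simp [hσ, add_assoc, h11]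
    · simp [hσ, Function.update_of_ne hi]
  have hbij := hinv.bijective
  have key : ∑ ε : Fin n → ZMod 2, e2 (dot η ε)
      = ∑ ε : Fin n → ZMod 2, e2 (dot η (σ ε)) :=
    (Fintype.sum_bijective σ hbij _ _ (fun ε => rfl)).symm
  have flip : ∀ ε, e2 (dot η (σ ε)) = - e2 (dot η ε) := by
    intro ε
    rw [hσ]
    simp only
    rw [dot_update, hi0, e2_add, e2_one]
    ring
  rw [Finset.sum_congr rfl (fun ε _ => flip ε)] at key
  rw [Finset.sum_neg_distrib] at key
  linarith

lemma sum_dot_eq_zero {n : ℕ} (δ : Fin n → ZMod 2) (hδ : δ ≠ 0) :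
    ∑ η : Fin n → ZMod 2, e2 (dot η δ) = 0 := by
  rw [Finset.sum_congr rfl (fun η _ => by rw [dot_comm])]
  exact orth δ hδ

lemma inversion {n : ℕ} (g : (Fin n → ZMod 2) → ℤ)
    (hg : ∀ ε, g ε = 1 ∨ g ε = -1)
    (h : ∀ η, ∑ ε : Fin n → ZMod 2, g ε * e2 (dot η ε) = 0) : False := by
  have h0 : (0 : ℤ) = ∑ η : Fin n → ZMod 2, (∑ ε : Fin n → ZMod 2, g ε * e2 (dot η ε)) * e2 (dot η 0) := by
    simp [h]
  rw [Finset.sum_congr rfl (fun η _ => Finset.sum_mul _ _ _)] at h0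
  rw [Finset.sum_comm] at h0
  have inner : ∀ ε : Fin n → ZMod 2,
      ∑ η : Fin n → ZMod 2, g ε * e2 (dot η ε) * e2 (dot η 0)
        = g ε * (if ε = 0 then (Fintype.card (Fin n → ZMod 2) : ℤ) else 0) := by
    intro ε
    have : ∀ η : Fin n → ZMod 2, g ε * e2 (dot η ε) * e2 (dot η 0) = g ε * e2 (dot η ε) := by
      intro η; simp [dot, e2_zero]
    rw [Finset.sum_congr rfl (fun η _ => this η), ← Finset.mul_sum]
    by_cases hε : ε = 0
    · subst hε
      simp [dot, e2_zero, Finset.card_univ]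
    · rw [sum_dot_eq_zero ε hε]
      simp [hε]
  rw [Finset.sum_congr rfl (fun ε _ => inner ε)] at h0
  have conv2 : ∀ ε : Fin n → ZMod 2,
      (g ε * if ε = 0 then (Fintype.card (Fin n → ZMod 2) : ℤ) else 0)
      = if ε = 0 then g ε * (Fintype.card (Fin n → ZMod 2) : ℤ) else 0 := by
    intro ε; by_cases hε : ε = 0 <;> simp [hε]
  rw [Finset.sum_congr rfl (fun ε _ => conv2 ε),
    Finset.sum_ite_eq' Finset.univ (0 : Fin n → ZMod 2)] at h0
  simp only [Finset.mem_univ, if_true] at h0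
  have hcard : 0 < (Fintype.card (Fin n → ZMod 2) : ℤ) := by
    exact_mod_cast Fintype.card_pos
  rcases hg 0 with h1 | h1 <;> rw [h1] at h0 <;> linarith



lemma zmod2_eq_zero {b : ZMod 2} (h : b ≠ 1) : b = 0 := by revert b; decide

lemma subset_sum_of_mem_span {M : Type*} [AddCommGroup M] [Module (ZMod 2) M]
    [DecidableEq M]
    {s : Finset M} {x : M} (hx : x ∈ Submodule.span (ZMod 2) (s : Set M)) :
    ∃ C ⊆ s, ∑ y ∈ C, y = x := by
  classical
  obtain ⟨f, -, hf⟩ := Submodule.mem_span_finset.1 hx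
  refine ⟨s.filter (fun y => f y = 1), Finset.filter_subset _ _, ?_⟩
  rw [← hf, ← Finset.sum_filter_add_sum_filter_not s (fun y => f y = 1) (fun y => f y • y)]
  have h1 : ∀ y ∈ s.filter (fun y => f y = 1), f y • y = y := by
    intro y hy; rw [(Finset.mem_filter.1 hy).2, one_smul]
  have h0 : ∀ y ∈ s.filter (fun y => ¬ f y = 1), f y • y = (0 : M) := by
    intro y hy
    rw [zmod2_eq_zero (Finset.mem_filter.1 hy).2, zero_smul]
  rw [Finset.sum_congr rfl h1, Finset.sum_congr rfl h0]
  simp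

lemma cover {n : ℕ} (Val : Finset (Fin n → ZMod 2)) (h0 : (0 : Fin n → ZMod 2) ∉ Val)
    (hspan : Submodule.span (ZMod 2) (Val : Set (Fin n → ZMod 2)) = ⊤)
    (hdep : ¬ LinearIndependent (ZMod 2) (Subtype.val : ↥(Val : Set (Fin n → ZMod 2)) → (Fin n → ZMod 2)))
    (η : Fin n → ZMod 2) :
    ∃ F : Finset (Fin n → ZMod 2), (F : Set (Fin n → ZMod 2)) ⊆ (Val : Set (Fin n → ZMod 2))
      ∧ F.card + 1 ≤ n ∧ ∑ x ∈ F, x = η := by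
  classical
  obtain ⟨b, hbsub, hbspan, hbind⟩ :=
    exists_linearIndependent (ZMod 2) (Val : Set (Fin n → ZMod 2))
  rw [hspan] at hbspan
  have hbfin : b.Finite := Set.toFinite b
  set B : Finset (Fin n → ZMod 2) := hbfin.toFinset with hB
  have hBcoe : (B : Set (Fin n → ZMod 2)) = b := hbfin.coe_toFinset
  haveI : Fintype b := hbfin.fintype
  have hbasis : Module.Basis b (ZMod 2) (Fin n → ZMod 2) :=
    Module.Basis.mk hbind (by rw [Subtype.range_coe, hbspan])
  have hcardb : Fintype.card b = n := by
    have := Module.finrank_eq_card_basis hbasis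
    rw [Module.finrank_fin_fun] at this
    omega
  have hcardB : B.card = n := by
    rw [hB, Set.Finite.card_toFinset]; exact hcardb
  have hne : b ≠ (Val : Set (Fin n → ZMod 2)) := by
    intro h
    exact hdep (h ▸ hbind)
  obtain ⟨wv, hwvVal, hwvb⟩ := Set.exists_of_ssubset (hbsub.ssubset_of_ne hne)
  have hηspan : η ∈ Submodule.span (ZMod 2) (B : Set (Fin n → ZMod 2)) := by
    rw [hBcoe, hbspan]; trivial
  obtain ⟨C, hCB, hCsum⟩ := subset_sum_of_mem_span hηspan
  by_cases hCeq : C = B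
  · -- need the extra element wv
    have hwvspan : wv ∈ Submodule.span (ZMod 2) (B : Set (Fin n → ZMod 2)) := by
      rw [hBcoe, hbspan]; trivial
    obtain ⟨D, hDB, hDsum⟩ := subset_sum_of_mem_span hwvspan
    have hD2 : 2 ≤ D.card := by
      rcases Nat.lt_or_ge D.card 2 with h | h
      · interval_cases hDc : D.card
        · rw [Finset.card_eq_zero] at hDc
          subst hDc
          simp at hDsum
          rw [← hDsum] at hwvVal
          exact absurd hwvVal h0
        · rw [Finset.card_eq_one] at hDc
          obtain ⟨d, rfl⟩ := hDc
          simp at hDsum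
          apply absurd _ hwvb
          rw [← hDsum, ← hBcoe]
          exact_mod_cast hDB (Finset.mem_singleton_self d)
      · exact h
    refine ⟨insert wv (B \ D), ?_, ?_, ?_⟩
    · intro x hx
      simp only [Finset.coe_insert, Set.mem_insert_iff] at hx
      rcases hx with rfl | hx
      · exact hwvVal
      · exact hbsub (hBcoe ▸ (Finset.mem_coe.2 (Finset.mem_sdiff.1 (Finset.mem_coe.1 hx)).1))
    · have hwvnot : wv ∉ B \ D := by
        intro h
        exact hwvb (hBcoe ▸ Finset.mem_coe.2 (Finset.mem_sdiff.1 h).1)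
      rw [Finset.card_insert_of_notMem hwvnot, Finset.card_sdiff_of_subset hDB, hcardB]
      have := Finset.card_le_card hDB
      omega
    · have hwvnot : wv ∉ B \ D := by
        intro h
        exact hwvb (hBcoe ▸ Finset.mem_coe.2 (Finset.mem_sdiff.1 h).1)
      rw [Finset.sum_insert hwvnot, ← hDsum, add_comm, Finset.sum_sdiff hDB]
      rw [hCeq] at hCsum
      exact hCsum
  · refine ⟨C, ?_, ?_, hCsum⟩
    · intro x hx
      exact hbsub (hBcoe ▸ Finset.mem_coe.2 (hCB (Finset.mem_coe.1 hx)))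
    · have : C ⊂ B := hCB.ssubset_of_ne hCeq
      have := Finset.card_lt_card this
      omega

open Finset Submodule Matrix

lemma prod_ind {γ : Type*} (B : Finset γ) (p : γ → Prop) [DecidablePred p] :
    ∏ c ∈ B, (if p c then (1:ℤ) else 0) = if ∀ c ∈ B, p c then 1 else 0 := by
  induction B using Finset.cons_induction with
  | empty => simp
  | cons a s ha ih =>
    rw [Finset.prod_cons, ih]
    by_cases hp : p a <;> simp [Finset.forall_mem_cons, hp]

lemma span_cols_top {n v : ℕ} (w : Fin n → (Fin v → ZMod 2))
    (hw : LinearIndependent (ZMod 2) w) :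
    Submodule.span (ZMod 2) (Set.range (fun c : Fin v => (fun i => w i c))) = ⊤ := by
  set M : Matrix (Fin n) (Fin v) (ZMod 2) := Matrix.of (fun i c => w i c) with hM
  have hcol : Set.range (fun c : Fin v => (fun i => w i c)) = Set.range Mᵀ := rfl
  apply Submodule.eq_top_of_finrank_eq
  rw [Module.finrank_fin_fun]
  have h1 : Mᵀ.rank = Module.finrank (ZMod 2) (Submodule.span (ZMod 2) (Set.range Mᵀ)) :=
    Matrix.rank_eq_finrank_span_row Mᵀ
  have h2 : Mᵀ.rank = M.rank := Matrix.rank_transpose M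
  have h3 : M.rank = Module.finrank (ZMod 2) (Submodule.span (ZMod 2) (Set.range M)) :=
    Matrix.rank_eq_finrank_span_row M
  have h4 : Set.range M = Set.range w := rfl
  have h5 : Module.finrank (ZMod 2) (Submodule.span (ZMod 2) (Set.range w)) = n := by
    rw [finrank_span_eq_card hw, Fintype.card_fin]
  rw [hcol, ← h1, h2, h3, h4, h5]

lemma trade_char {n v t : ℕ} (w : Fin n → (Fin v → ZMod 2))
    (hw : LinearIndependent (ZMod 2) w) (a : Fin v → ZMod 2)
    (T0 T1 : Finset (Fin v → ZMod 2)) (htr : IsTrade t v T0 T1)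
    (hun : T0 ∪ T1 = Finset.univ.image (fun ε : Fin n → ZMod 2 => a + ∑ i, ε i • w i))
    (A : Finset (Fin v)) (hA : A.card ≤ t) :
    ∑ ε : Fin n → ZMod 2,
      (if (a + ∑ i, ε i • w i) ∈ T0 then (1:ℤ) else -1) *
        e2 (dot (fun i => ∑ c ∈ A, w i c) ε) = 0 := by
  classical
  set xm : (Fin n → ZMod 2) → (Fin v → ZMod 2) := fun ε => a + ∑ i, ε i • w i with hxm
  have hinj : Function.Injective xm := by
    intro ε ε' h
    simp only [hxm, add_right_inj] at h
    have hz : ∑ i, (ε i - ε' i) • w i = 0 := by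
      rw [Finset.sum_congr rfl (fun i _ => sub_smul (ε i) (ε' i) (w i)),
        Finset.sum_sub_distrib, h, sub_self]
    have hco := Fintype.linearIndependent_iff.1 hw _ hz
    funext i
    have := hco i
    exact sub_eq_zero.1 this
  -- Finset-level trade condition
  have htrB : ∀ B : Finset (Fin v), B.card ≤ t →
      ((T0.filter (fun x => ∀ c ∈ B, x c = 1)).card : ℤ)
        = ((T1.filter (fun x => ∀ c ∈ B, x c = 1)).card : ℤ) := by
    intro B hB
    have hsize : size (fun c => if c ∈ B then (1 : ZMod 2) else 0) = B.card := by
      unfold size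
      congr 1
      ext c
      by_cases hc : c ∈ B <;> simp [hc]
    have hcond := htr.2 (fun c => if c ∈ B then (1:ZMod 2) else 0) (by rw [hsize]; exact hB)
    have hfilters : ∀ x : Fin v → ZMod 2,
        (∀ j, (if j ∈ B then (1:ZMod 2) else 0) = 1 → x j = 1) ↔ (∀ c ∈ B, x c = 1) := by
      intro x
      constructor
      · intro h c hc; exact h c (by simp [hc])
      · intro h j hj
        by_cases hjB : j ∈ B
        · exact h j hjB
        · simp [hjB] at hj
    rw [Finset.filter_congr (fun x _ => hfilters x), Finset.filter_congr (fun x _ => hfilters x)]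
      at hcond
    exact_mod_cast hcond
  -- expansion of the character as subset sums
  have hexp : ∀ x : Fin v → ZMod 2,
      ∏ c ∈ A, e2 (x c)
        = ∑ B ∈ A.powerset, (-2:ℤ)^B.card * (if ∀ c ∈ B, x c = 1 then 1 else 0) := by
    intro x
    have h1 : ∀ c, e2 (x c) = (if x c = 1 then (-2:ℤ) else 0) + 1 := by
      intro c; generalize x c = b; revert b; decide
    rw [Finset.prod_congr rfl (fun c _ => h1 c), Finset.prod_add]
    apply Finset.sum_congr rfl
    intro B hB
    rw [Finset.prod_const_one, mul_one]
    have h2 : ∀ c, (if x c = 1 then (-2:ℤ) else 0) = (-2) * (if x c = 1 then 1 else 0) := by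
      intro c; by_cases h : x c = 1 <;> simp [h]
    rw [Finset.prod_congr rfl (fun c _ => h2 c), Finset.prod_mul_distrib,
      Finset.prod_const, prod_ind]
    by_cases hall : ∀ c ∈ B, x c = 1 <;> simp [hall]
  have hsum : ∀ S : Finset (Fin v → ZMod 2),
      ∑ x ∈ S, ∏ c ∈ A, e2 (x c)
        = ∑ B ∈ A.powerset, (-2:ℤ)^B.card
            * ((S.filter (fun x => ∀ c ∈ B, x c = 1)).card : ℤ) := by
    intro S
    rw [Finset.sum_congr rfl (fun x _ => hexp x), Finset.sum_comm]
    apply Finset.sum_congr rfl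
    intro B hB
    rw [← Finset.mul_sum]
    congr 1
    rw [Finset.sum_boole]
  have hΦ : ∑ x ∈ T0, ∏ c ∈ A, e2 (x c) = ∑ x ∈ T1, ∏ c ∈ A, e2 (x c) := by
    rw [hsum T0, hsum T1]
    apply Finset.sum_congr rfl
    intro B hB
    rw [htrB B (le_trans (Finset.card_le_card (Finset.mem_powerset.1 hB)) hA)]
  -- convert to a sum over ε
  have hsplit : ∑ ε : Fin n → ZMod 2,
      (if xm ε ∈ T0 then (1:ℤ) else -1) * ∏ c ∈ A, e2 (xm ε c)
      = ∑ x ∈ T0, ∏ c ∈ A, e2 (x c) - ∑ x ∈ T1, ∏ c ∈ A, e2 (x c) := by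
    have himg : ∑ x ∈ Finset.univ.image xm,
        (if x ∈ T0 then (1:ℤ) else -1) * ∏ c ∈ A, e2 (x c)
        = ∑ ε : Fin n → ZMod 2, (if xm ε ∈ T0 then (1:ℤ) else -1) * ∏ c ∈ A, e2 (xm ε c) :=
      Finset.sum_image (fun x _ y _ h => hinj h)
    rw [← himg, ← hun, Finset.sum_union htr.1]
    have hT0 : ∀ x ∈ T0, (if x ∈ T0 then (1:ℤ) else -1) * ∏ c ∈ A, e2 (x c)
        = ∏ c ∈ A, e2 (x c) := by
      intro x hx; rw [if_pos hx, one_mul]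
    have hT1 : ∀ x ∈ T1, (if x ∈ T0 then (1:ℤ) else -1) * ∏ c ∈ A, e2 (x c)
        = -(∏ c ∈ A, e2 (x c)) := by
      intro x hx
      rw [if_neg (Finset.disjoint_right.1 htr.1 hx), neg_one_mul]
    rw [Finset.sum_congr rfl hT0, Finset.sum_congr rfl hT1, Finset.sum_neg_distrib]
    ring
  have hfact : ∀ ε : Fin n → ZMod 2, ∏ c ∈ A, e2 (xm ε c)
      = e2 (∑ c ∈ A, a c) * e2 (dot (fun i => ∑ c ∈ A, w i c) ε) := by
    intro ε
    rw [← e2_sum, ← e2_add]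
    congr 1
    have hxc : ∀ c, xm ε c = a c + ∑ i, ε i * w i c := by
      intro c
      simp [hxm, Finset.sum_apply]
    rw [Finset.sum_congr rfl (fun c _ => hxc c), Finset.sum_add_distrib]
    congr 1
    unfold dot
    rw [Finset.sum_comm]
    apply Finset.sum_congr rfl
    intro i _
    rw [← Finset.mul_sum, mul_comm]
  have hzero : ∑ ε : Fin n → ZMod 2,
      (if xm ε ∈ T0 then (1:ℤ) else -1) * ∏ c ∈ A, e2 (xm ε c) = 0 := by
    rw [hsplit, hΦ, sub_self]
  rw [Finset.sum_congr rfl (fun ε _ => by rw [hfact ε])] at hzero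
  have : e2 (∑ c ∈ A, a c)
      * ∑ ε : Fin n → ZMod 2, (if xm ε ∈ T0 then (1:ℤ) else -1)
          * e2 (dot (fun i => ∑ c ∈ A, w i c) ε) = 0 := by
    rw [Finset.mul_sum]
    rw [← hzero]
    apply Finset.sum_congr rfl
    intro ε _
    ring
  rcases mul_eq_zero.1 this with h | h
  · exact absurd h (e2_ne_zero _)
  · exact h

lemma T_eq_image {v n : ℕ} (T : Finset (Fin v → ZMod 2)) (a : Fin v → ZMod 2)
    (w : Fin n → (Fin v → ZMod 2))
    (hTset : (T : Set (Fin v → ZMod 2))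
      = (fun y => a + y) '' (Submodule.span (ZMod 2) (Set.range w) : Set (Fin v → ZMod 2))) :
    T = Finset.univ.image (fun ε : Fin n → ZMod 2 => a + ∑ i, ε i • w i) := by
  apply Finset.coe_injective
  rw [Finset.coe_image, Finset.coe_univ, Set.image_univ, hTset]
  ext u
  constructor
  · rintro ⟨y, hy, rfl⟩
    obtain ⟨ε, hε⟩ := (mem_span_range_iff_exists_fun (ZMod 2)).1 hy
    refine ⟨ε, ?_⟩
    simp only
    rw [hε]
  · rintro ⟨ε, rfl⟩
    exact ⟨∑ i, ε i • w i, (mem_span_range_iff_exists_fun (ZMod 2)).2 ⟨ε, rfl⟩, rfl⟩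

lemma xm_injective {v n : ℕ} (a : Fin v → ZMod 2) (w : Fin n → (Fin v → ZMod 2))
    (hw : LinearIndependent (ZMod 2) w) :
    Function.Injective (fun ε : Fin n → ZMod 2 => a + ∑ i, ε i • w i) := by
  intro ε ε' h
  simp only [add_right_inj] at h
  have hz : ∑ i, (ε i - ε' i) • w i = 0 := by
    rw [Finset.sum_congr rfl (fun i _ => sub_smul (ε i) (ε' i) (w i)),
      Finset.sum_sub_distrib, h, sub_self]
  have hco := Fintype.linearIndependent_iff.1 hw _ hz
  funext i
  exact sub_eq_zero.1 (hco i)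

lemma exists_trade {v t : ℕ} (a : Fin v → ZMod 2) (bs : Fin (t+1) → (Fin v → ZMod 2))
    (hind : LinearIndependent (ZMod 2) bs)
    (hdis : ∀ i j, i ≠ j → ∀ c, ¬(bs i c = 1 ∧ bs j c = 1)) :
    ∃ T0 T1 : Finset (Fin v → ZMod 2), IsTrade t v T0 T1 ∧
      T0 ∪ T1 = Finset.univ.image (fun ε : Fin (t+1) → ZMod 2 => a + ∑ i, ε i • bs i) := by
  classical
  set xm : (Fin (t+1) → ZMod 2) → (Fin v → ZMod 2) := fun ε => a + ∑ i, ε i • bs i with hxm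
  have hinj : Function.Injective xm := xm_injective a bs hind
  set par : (Fin (t+1) → ZMod 2) → ZMod 2 := fun ε => ∑ i, ε i with hpar
  refine ⟨(Finset.univ.filter (fun ε => par ε = 0)).image xm,
    (Finset.univ.filter (fun ε => par ε = 1)).image xm, ⟨?_, ?_⟩, ?_⟩
  · rw [Finset.disjoint_left]
    intro x hx0 hx1
    obtain ⟨ε, hε, hεx⟩ := Finset.mem_image.1 hx0
    obtain ⟨ε', hε', hε'x⟩ := Finset.mem_image.1 hx1
    have : ε = ε' := hinj (by rw [hεx, hε'x])
    subst this
    rw [Finset.mem_filter] at hε hε'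
    rw [hε.2] at hε'
    exact absurd hε'.2 (by decide)
  · -- the trade count condition
    intro s hs
    -- find a basis vector whose support avoids s
    have hi0 : ∃ i0 : Fin (t+1), ∀ c, s c = 1 → bs i0 c = 0 := by
      by_contra h
      push_neg at h
      have h' : ∀ i : Fin (t+1), ∃ c, s c = 1 ∧ bs i c = 1 := by
        intro i
        obtain ⟨c, hc1, hc2⟩ := h i
        exact ⟨c, hc1, by
          have : ∀ b : ZMod 2, b ≠ 0 → b = 1 := by decide
          exact this _ hc2⟩
      choose cf hc1 hc2 using h'
      have hcfinj : Function.Injective cf := by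
        intro i j hij
        by_contra hne
        exact hdis i j hne (cf j) ⟨hij ▸ hc2 i, hc2 j⟩
      have hle : t + 1 ≤ size s := by
        unfold size
        have := Finset.card_le_card_of_injOn (s := Finset.univ)
          (t := Finset.univ.filter (fun c => s c = 1)) cf
          (fun i _ => Finset.mem_filter.2 ⟨Finset.mem_univ _, hc1 i⟩)
          (fun i _ j _ h => hcfinj h)
        simpa using this
      omega
    obtain ⟨i0, hi0⟩ := hi0
    set P : (Fin v → ZMod 2) → Prop := fun x => ∀ j, s j = 1 → x j = 1 with hP
    have hfilt : ∀ b : ZMod 2,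
        ((Finset.univ.filter (fun ε => par ε = b)).image xm).filter P
          = (Finset.univ.filter (fun ε => par ε = b ∧ P (xm ε))).image xm := by
      intro b
      rw [Finset.filter_image]
      congr 1
      ext ε
      simp only [Finset.mem_filter, Finset.mem_univ, true_and, Function.comp]
    have hcards : ∀ b : ZMod 2,
        (((Finset.univ.filter (fun ε => par ε = b)).image xm).filter P).card
          = (Finset.univ.filter (fun ε => par ε = b ∧ P (xm ε))).card := by
      intro b
      rw [hfilt b, Finset.card_image_of_injective _ hinj]
    rw [hcards 0, hcards 1]
    -- bijection by adding `Pi.single i0 1`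
    set σ : (Fin (t+1) → ZMod 2) → (Fin (t+1) → ZMod 2) := fun ε => ε + Pi.single i0 1 with hσ
    have hσσ : ∀ ε, σ (σ ε) = ε := by
      intro ε
      funext i
      by_cases hi : i = i0
      · subst hi
        simp only [hσ, Pi.add_apply, Pi.single_eq_same]
        have h11 : ∀ b : ZMod 2, b + 1 + 1 = b := by decide
        exact h11 _
      · simp [hσ, Pi.single_eq_of_ne hi]
    have hparσ : ∀ ε, par (σ ε) = par ε + 1 := by
      intro ε
      rw [hσ, hpar]
      simp only [Pi.add_apply]
      rw [Finset.sum_add_distrib]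
      congr 1
      rw [Finset.sum_pi_single']
      simp
    have hxmσ : ∀ ε, xm (σ ε) = xm ε + bs i0 := by
      intro ε
      rw [hxm]
      simp only
      rw [add_assoc]
      congr 1
      have hterm : ∀ i : Fin (t+1), σ ε i • bs i = ε i • bs i + (Pi.single i0 1 : Fin (t+1) → ZMod 2) i • bs i := by
        intro i
        rw [hσ]
        simp only [Pi.add_apply]
        rw [add_smul]
      rw [Finset.sum_congr rfl (fun i _ => hterm i), Finset.sum_add_distrib]
      congr 1
      rw [Finset.sum_eq_single i0]
      · simp
      · intro i _ hi
        rw [Pi.single_eq_of_ne hi, zero_smul]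
      · intro h
        exact absurd (Finset.mem_univ i0) h
    have hPσ : ∀ ε, P (xm (σ ε)) ↔ P (xm ε) := by
      intro ε
      rw [hxmσ]
      constructor
      · intro h j hj
        have := h j hj
        rw [Pi.add_apply, hi0 j hj, add_zero] at this
        exact this
      · intro h j hj
        rw [Pi.add_apply, hi0 j hj, add_zero]
        exact h j hj
    apply Finset.card_bij' (fun ε _ => σ ε) (fun ε _ => σ ε)
    · intro ε hε
      rw [Finset.mem_filter] at hε ⊢
      refine ⟨Finset.mem_univ _, ?_, (hPσ ε).2 hε.2.2⟩
      rw [hparσ, hε.2.1, zero_add]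
    · intro ε hε
      rw [Finset.mem_filter] at hε ⊢
      refine ⟨Finset.mem_univ _, ?_, (hPσ ε).2 hε.2.2⟩
      rw [hparσ, hε.2.1]
      rfl
    · intro ε _; exact hσσ ε
    · intro ε _; exact hσσ ε
  · rw [← Finset.image_union]
    congr 1
    ext ε
    simp only [Finset.mem_union, Finset.mem_filter, Finset.mem_univ, true_and]
    have : ∀ b : ZMod 2, b = 0 ∨ b = 1 := by decide
    simpa using this (par ε)

lemma disjoint_basis_of_trade {v t : ℕ} (w : Fin (t+1) → (Fin v → ZMod 2))
    (hw : LinearIndependent (ZMod 2) w) (a : Fin v → ZMod 2)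
    (T0 T1 : Finset (Fin v → ZMod 2)) (htr : IsTrade t v T0 T1)
    (hun : T0 ∪ T1 = Finset.univ.image (fun ε : Fin (t+1) → ZMod 2 => a + ∑ i, ε i • w i)) :
    ∃ bs : Fin (t+1) → (Fin v → ZMod 2),
      LinearIndependent (ZMod 2) bs ∧
      (∀ i j, i ≠ j → ∀ c, ¬(bs i c = 1 ∧ bs j c = 1)) ∧
      Submodule.span (ZMod 2) (Set.range bs) = Submodule.span (ZMod 2) (Set.range w) := by
  classical
  set col : Fin v → (Fin (t+1) → ZMod 2) := fun c => fun i => w i c with hcol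
  have hcolspan : Submodule.span (ZMod 2) (Set.range col) = ⊤ := span_cols_top w hw
  set Val : Finset (Fin (t+1) → ZMod 2) := (Finset.univ.image col).erase 0 with hVal
  have hmemVal : ∀ c : Fin v, col c ≠ 0 → col c ∈ Val := by
    intro c h
    rw [hVal]
    exact Finset.mem_erase.2 ⟨h, Finset.mem_image_of_mem col (Finset.mem_univ c)⟩
  have hValcol : ∀ d ∈ Val, ∃ c, col c = d := by
    intro d hd
    obtain ⟨c, _, hc⟩ := Finset.mem_image.1 (Finset.mem_of_mem_erase hd)
    exact ⟨c, hc⟩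
  have hValspan : Submodule.span (ZMod 2) ((Val : Set (Fin (t+1) → ZMod 2))) = ⊤ := by
    apply le_antisymm le_top
    rw [← hcolspan]
    apply Submodule.span_le.2
    rintro x ⟨c, rfl⟩
    by_cases h0 : col c = 0
    · rw [h0]; exact Submodule.zero_mem _
    · exact Submodule.subset_span (hmemVal c h0)
  have hind : LinearIndependent (ZMod 2)
      (Subtype.val : ↥(Val : Set (Fin (t+1) → ZMod 2)) → (Fin (t+1) → ZMod 2)) := by
    by_contra hdep
    exfalso
    apply inversion (fun ε : Fin (t+1) → ZMod 2 =>
        if (a + ∑ i, ε i • w i) ∈ T0 then (1:ℤ) else -1)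
      (fun ε => by
        by_cases h : (a + ∑ i, ε i • w i) ∈ T0
        · left; rw [if_pos h]
        · right; rw [if_neg h])
    intro η
    obtain ⟨F, hFV, hFc, hFs⟩ := cover Val (Finset.notMem_erase 0 _) hValspan hdep η
    have hrep : ∀ d ∈ F, ∃ c : Fin v, col c = d := by
      intro d hd
      exact hValcol d (Finset.mem_coe.1 (hFV (Finset.mem_coe.2 hd)))
    set rep : {d // d ∈ F} → Fin v := fun d => (hrep d.1 d.2).choose with hrepdef
    have hrepspec : ∀ d : {d // d ∈ F}, col (rep d) = d.1 :=
      fun d => (hrep d.1 d.2).choose_spec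
    set A : Finset (Fin v) := F.attach.image rep with hA
    have hrepinj : ∀ x ∈ F.attach, ∀ y ∈ F.attach, rep x = rep y → x = y := by
      intro x _ y _ h
      apply Subtype.ext
      rw [← hrepspec x, ← hrepspec y, h]
    have hAcard : A.card ≤ t := by
      rw [hA, Finset.card_image_of_injOn
        (fun x hx y hy h => hrepinj x (Finset.mem_coe.1 hx) y (Finset.mem_coe.1 hy) h),
        Finset.card_attach]
      omega
    have hAsum : (fun i => ∑ c ∈ A, w i c) = η := by
      funext i
      rw [hA, Finset.sum_image hrepinj]
      have hterm : ∀ d : {d // d ∈ F}, w i (rep d) = d.1 i := by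
        intro d
        rw [← hrepspec d]
      rw [Finset.sum_congr rfl (fun d _ => hterm d)]
      have h1 : ∑ d ∈ F.attach, d.1 i = ∑ x ∈ F, x i := Finset.sum_attach F (fun x => x i)
      rw [h1, ← hFs]
      exact (Finset.sum_apply i F (fun x => x)).symm
    have := trade_char w hw a T0 T1 htr hun A hAcard
    rw [hAsum] at this
    exact this
  -- independent case: construct the disjoint-support basis
  haveI : Fintype ↥(Val : Set (Fin (t+1) → ZMod 2)) := FinsetCoe.fintype Val
  set hVb : Module.Basis ↥(Val : Set (Fin (t+1) → ZMod 2)) (ZMod 2) (Fin (t+1) → ZMod 2) :=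
    Module.Basis.mk hind (by rw [Subtype.range_val]; exact hValspan.ge) with hVbdef
  have hcard : Fintype.card ↥(Val : Set (Fin (t+1) → ZMod 2)) = t + 1 := by
    have := Module.finrank_eq_card_basis hVb
    rw [Module.finrank_fin_fun] at this
    omega
  set e : Fin (t+1) ≃ ↥(Val : Set (Fin (t+1) → ZMod 2)) :=
    Fintype.equivOfCardEq (by rw [Fintype.card_fin, hcard]) with he
  set Bb : Module.Basis (Fin (t+1)) (ZMod 2) (Fin (t+1) → ZMod 2) := hVb.reindex e.symm with hBb
  have hBbk : ∀ k, Bb k = ((e k : ↥(Val : Set (Fin (t+1) → ZMod 2))) : Fin (t+1) → ZMod 2) := by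
    intro k
    rw [hBb, Module.Basis.reindex_apply, Equiv.symm_symm, hVbdef]
    exact Module.Basis.mk_apply hind _ (e k)
  set bs : Fin (t+1) → (Fin v → ZMod 2) := fun k => fun c => Bb.repr (col c) k with hbs
  -- repr of a column is zero or a single
  have hreprcol : ∀ (c : Fin v) (h0 : col c ≠ 0),
      Bb.repr (col c) = Finsupp.single (e.symm ⟨col c, Finset.mem_coe.2 (hmemVal c h0)⟩) 1 := by
    intro c h0
    set d : ↥(Val : Set (Fin (t+1) → ZMod 2)) := ⟨col c, Finset.mem_coe.2 (hmemVal c h0)⟩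
      with hd'
    have hBd : Bb (e.symm d) = (d : Fin (t+1) → ZMod 2) := by
      rw [hBbk, Equiv.apply_symm_apply]
    have hcd : col c = Bb (e.symm d) := hBd.symm
    rw [hcd, Module.Basis.repr_self]
  have hdis : ∀ i j, i ≠ j → ∀ c, ¬(bs i c = 1 ∧ bs j c = 1) := by
    rintro i j hij c ⟨hi, hj⟩
    by_cases h0 : col c = 0
    · rw [hbs] at hi
      simp only at hi
      rw [h0, map_zero, Finsupp.zero_apply] at hi
      exact absurd hi (by decide)
    · rw [hbs] at hi hj
      simp only at hi hj
      rw [hreprcol c h0, Finsupp.single_apply] at hi hj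
      have hione : i = e.symm ⟨col c, Finset.mem_coe.2 (hmemVal c h0)⟩ := by
        by_contra hne
        rw [if_neg (fun h => hne h.symm)] at hi
        exact absurd hi (by decide)
      have hjone : j = e.symm ⟨col c, Finset.mem_coe.2 (hmemVal c h0)⟩ := by
        by_contra hne
        rw [if_neg (fun h => hne h.symm)] at hj
        exact absurd hj (by decide)
      exact hij (hione.trans hjone.symm)
  have hbsind : LinearIndependent (ZMod 2) bs := by
    rw [Fintype.linearIndependent_iff]
    intro g hg k
    have hk : (Bb k : Fin (t+1) → ZMod 2) ∈ Val := by
      rw [hBbk]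
      exact Finset.mem_coe.1 (e k).2
    obtain ⟨c, hc⟩ := hValcol _ hk
    have hgc := congrFun hg c
    simp only [Finset.sum_apply, Pi.smul_apply, smul_eq_mul, Pi.zero_apply] at hgc
    have hbc : ∀ i, bs i c = if i = k then 1 else 0 := by
      intro i
      rw [hbs]
      simp only
      rw [hc, Module.Basis.repr_self, Finsupp.single_apply]
      by_cases h : i = k
      · rw [if_pos h, if_pos h.symm]
      · rw [if_neg h, if_neg (fun hh => h hh.symm)]
    rw [Finset.sum_congr rfl (fun i _ => by rw [hbc i, mul_ite, mul_one, mul_zero]),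
      Finset.sum_ite_eq' Finset.univ k g] at hgc
    simpa using hgc
  have hspan : Submodule.span (ZMod 2) (Set.range bs)
      = Submodule.span (ZMod 2) (Set.range w) := by
    apply le_antisymm
    · apply Submodule.span_le.2
      rintro x ⟨k, rfl⟩
      have hx : bs k = ∑ i, (Bb.repr (fun j => if i = j then (1:ZMod 2) else 0) k) • w i := by
        funext c
        rw [hbs]
        simp only
        have hcol_expand := pi_eq_sum_univ (col c)
        rw [hcol_expand, map_sum, Finsupp.finset_sum_apply]
        rw [Finset.sum_apply]
        apply Finset.sum_congr rfl
        intro i _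
        rw [_root_.map_smul, Finsupp.smul_apply, smul_eq_mul]
        simp only [Pi.smul_apply, smul_eq_mul]
        have hcw : col c i = w i c := rfl
        rw [hcw]
        exact mul_comm _ _
      rw [hx]
      exact Submodule.sum_mem _
        (fun i _ => Submodule.smul_mem _ _ (Submodule.subset_span ⟨i, rfl⟩))
    · apply Submodule.span_le.2
      rintro x ⟨i, rfl⟩
      have hx : w i = ∑ k, (Bb k i) • bs k := by
        funext c
        have hsr := congrFun (Bb.sum_repr (col c)) i
        rw [Finset.sum_apply] at hsr
        simp only [Pi.smul_apply, smul_eq_mul] at hsr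
        rw [Finset.sum_apply]
        simp only [Pi.smul_apply, smul_eq_mul]
        have hwc : w i c = col c i := rfl
        rw [hwc, ← hsr]
        apply Finset.sum_congr rfl
        intro k _
        rw [hbs]
        simp only
        rw [mul_comm]
      rw [hx]
      exact Submodule.sum_mem _
        (fun k _ => Submodule.smul_mem _ _ (Submodule.subset_span ⟨k, rfl⟩))
  exact ⟨bs, hbsind, hdis, hspan⟩

/-- an affine subspace `T` of `F_2^v` of dimension `t+1` can be split
into a `[t]`-trade iff it is a translation of the linear span of a basis of `t+1`
vectors with pairwise disjoint supports. -/
theorem affine_split_iff_disjoint_basis (v t : ℕ) (T : Finset (Fin v → ZMod 2))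
    (hT : ∃ (W : Submodule (ZMod 2) (Fin v → ZMod 2)) (a : Fin v → ZMod 2),
      Module.finrank (ZMod 2) W = t + 1 ∧
      (T : Set (Fin v → ZMod 2)) = (fun y => a + y) '' (W : Set (Fin v → ZMod 2))) :
    (∃ T0 T1 : Finset (Fin v → ZMod 2), IsTrade t v T0 T1 ∧ T0 ∪ T1 = T) ↔
    (∃ (a : Fin v → ZMod 2) (bs : Fin (t + 1) → (Fin v → ZMod 2)),
      LinearIndependent (ZMod 2) bs ∧
      (∀ i j, i ≠ j → ∀ c, ¬(bs i c = 1 ∧ bs j c = 1)) ∧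
      (T : Set (Fin v → ZMod 2)) =
        (fun y => a + y) ''
          ((Submodule.span (ZMod 2) (Set.range bs) : Submodule (ZMod 2) (Fin v → ZMod 2)) :
            Set (Fin v → ZMod 2))) := by
  classical
  obtain ⟨W, a, hrank, hTset⟩ := hT
  constructor
  · rintro ⟨T0, T1, htr, hun⟩
    let b0 : Module.Basis (Fin (t+1)) (ZMod 2) W :=
      (Module.finBasis (ZMod 2) W).reindex (finCongr hrank)
    set w : Fin (t+1) → (Fin v → ZMod 2) := fun i => (b0 i : Fin v → ZMod 2) with hwdef
    have hw : LinearIndependent (ZMod 2) w :=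
      b0.linearIndependent.map' W.subtype (Submodule.ker_subtype W)
    have hspanw : Submodule.span (ZMod 2) (Set.range w) = W := by
      have hr : Set.range w = W.subtype '' Set.range b0 := by
        rw [← Set.range_comp]; rfl
      rw [hr, Submodule.span_image, b0.span_eq, Submodule.map_top, Submodule.range_subtype]
    have hTimg : T = Finset.univ.image (fun ε : Fin (t+1) → ZMod 2 => a + ∑ i, ε i • w i) :=
      T_eq_image T a w (by rw [hspanw]; exact hTset)
    obtain ⟨bs, hbsind, hbsdis, hbsspan⟩ :=
      disjoint_basis_of_trade w hw a T0 T1 htr (by rw [← hTimg]; exact hun)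
    refine ⟨a, bs, hbsind, hbsdis, ?_⟩
    rw [hTset, ← hspanw, ← hbsspan]
  · rintro ⟨a', bs, hbsind, hbsdis, hTeq⟩
    obtain ⟨T0, T1, htr, hun⟩ := exists_trade a' bs hbsind hbsdis
    refine ⟨T0, T1, htr, ?_⟩
    rw [hun]
    exact (T_eq_image T a' bs hTeq).symm
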